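/- For every natural number m with m ≤ p^k − 1 and every n ≥ 1, the dimension over ℤ/pℤ of Ω_m^n equals C(m+n, n), where C denotes the binomial coefficient. In particular, the functions φ_α for α ∈ {0,…,p^k−1}^n are linearly independent over ℤ/pℤ. -/

import Mathlib

/-- The binomial phi function `φ_m : ℤ/p^kℤ → ℤ/pℤ`, `φ_m(x) = C(x̄, m) mod p`. -/
def phi (p k m : ℕ) (x : ZMod (p ^ k)) : ZMod p := (x.val.choose m : ZMod p)

/-- The multivariate phi function `φ_α(x) = φ_{α_1}(x_1)⋯φ_{α_n}(x_n)`. -/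
def phiN (p k n : ℕ) (α : Fin n → ℕ) (x : Fin n → ZMod (p ^ k)) : ZMod p :=
  ∏ i, phi p k (α i) (x i)

open Finset Matrix

/-- Stars and bars: number of `n`-tuples in `Fin q` with value-sum at most `m < q`. -/
lemma count_tuples : ∀ (n m q : ℕ), m < q →
    ((Finset.univ : Finset (Fin n → Fin q)).filter
        (fun α => ∑ i, (α i : ℕ) ≤ m)).card = (m + n).choose n := by
  intro n
  induction n with
  | zero =>
    intro m q hq
    rw [Finset.filter_true_of_mem (fun α _ => by simp)]
    simp
  | succ n ih =>
    intro m q hq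
    classical
    rw [Finset.card_eq_sum_card_fiberwise
      (f := fun α : Fin (n+1) → Fin q => α 0) (t := Finset.univ) (fun _ _ => Finset.mem_univ _)]
    have key : ∀ j : Fin q,
        (((Finset.univ : Finset (Fin (n+1) → Fin q)).filter
            (fun α => ∑ i, (α i : ℕ) ≤ m)).filter (fun α => α 0 = j)).card
          = if (j : ℕ) ≤ m then ((m - (j : ℕ)) + n).choose n else 0 := by
      intro j
      by_cases hj : (j : ℕ) ≤ m
      · rw [if_pos hj, ← ih (m - (j : ℕ)) q (lt_of_le_of_lt (Nat.sub_le _ _) hq)]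
        refine Finset.card_bij' (fun α _ => Fin.tail α)
          (fun β _ => Fin.cons j β) ?_ ?_ ?_ ?_
        · intro α hα
          simp only [Finset.mem_filter, Finset.mem_univ, true_and] at hα ⊢
          obtain ⟨hsum, h0⟩ := hα
          rw [Fin.sum_univ_succ, h0] at hsum
          have ht : ∑ i, (Fin.tail α i : ℕ) = ∑ i : Fin n, (α i.succ : ℕ) := rfl
          rw [ht]
          omega
        · intro β hβ
          simp only [Finset.mem_filter, Finset.mem_univ, true_and] at hβ ⊢
          constructor
          · rw [Fin.sum_univ_succ]
            simp only [Fin.cons_zero, Fin.cons_succ]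
            omega
          · simp
        · intro α hα
          simp only [Finset.mem_filter] at hα
          conv_rhs => rw [← Fin.cons_self_tail α]
          exact congrArg (fun t => Fin.cons t (Fin.tail α)) hα.2.symm
        · intro β _
          exact Fin.tail_cons _ _
      · rw [if_neg hj]
        rw [Finset.card_eq_zero, Finset.eq_empty_iff_forall_notMem]
        intro α hα
        simp only [Finset.mem_filter, Finset.mem_univ, true_and] at hα
        obtain ⟨hsum, h0⟩ := hα
        have : (α 0 : ℕ) ≤ ∑ i, (α i : ℕ) :=
          Finset.single_le_sum (f := fun i : Fin (n+1) => (α i : ℕ))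
            (fun i _ => Nat.zero_le _) (Finset.mem_univ 0)
        rw [h0] at this
        omega
    rw [Finset.sum_congr rfl (fun j _ => key j)]
    rw [Fin.sum_univ_eq_sum_range (fun j => if j ≤ m then ((m - j) + n).choose n else 0) q]
    rw [← Finset.sum_subset (Finset.range_subset_range.2 hq)
      (fun x _ hx => by rw [if_neg (by simp at hx; omega)])]
    rw [Finset.sum_congr rfl (fun j hj => if_pos (by simpa [Nat.lt_succ_iff] using hj))]
    have hrefl : ∑ x ∈ Finset.range (m + 1), (m - x + n).choose n
        = ∑ x ∈ Finset.range (m + 1), (x + n).choose n := by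
      rw [← Finset.sum_range_reflect (fun x => (m - x + n).choose n) (m + 1)]
      refine Finset.sum_congr rfl (fun j hj => ?_)
      simp only [Finset.mem_range, Nat.lt_succ_iff] at hj
      congr 2
      omega
    rw [hrefl, Nat.sum_range_add_choose m n]
    congr 1

section Main

variable (p k n : ℕ) [Fact p.Prime]

/-- The evaluation matrix of the `φ_α` family. -/
def phiMat : Matrix (Fin n → Fin (p ^ k)) (Fin n → Fin (p ^ k)) (ZMod p) :=
  fun α x => ∏ i, (((x i : ℕ).choose (α i : ℕ) : ℕ) : ZMod p)

lemma phiMat_blockTriangular :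
    (phiMat p k n).BlockTriangular (fun α => ∑ i, (α i : ℕ)) := by
  intro α x h
  have : ∃ i, (x i : ℕ) < (α i : ℕ) := by
    by_contra hc
    push_neg at hc
    exact absurd (Finset.sum_le_sum (fun i _ => hc i)) (not_le.2 h)
  obtain ⟨i, hi⟩ := this
  exact Finset.prod_eq_zero (Finset.mem_univ i)
    (by rw [Nat.choose_eq_zero_of_lt hi, Nat.cast_zero])

lemma phiMat_block_eq_one (a : ℕ) :
    (phiMat p k n).toSquareBlock (fun α => ∑ i, (α i : ℕ)) a = 1 := by
  classical
  ext ⟨α, hα⟩ ⟨x, hx⟩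
  by_cases h : α = x
  · subst h
    rw [Matrix.one_apply_eq]
    simp [Matrix.toSquareBlock_def, phiMat, Nat.choose_self]
  · rw [Matrix.one_apply_ne (by simpa using h)]
    have hex : ∃ i, (x i : ℕ) < (α i : ℕ) := by
      by_contra hc
      push_neg at hc
      have hne : ∃ i0, (α i0 : ℕ) < (x i0 : ℕ) := by
        obtain ⟨i0, hi0⟩ := Function.ne_iff.1 h
        exact ⟨i0, lt_of_le_of_ne (hc i0) (fun hh => hi0 (Fin.ext hh))⟩
      obtain ⟨i0, hi0⟩ := hne
      have hlt : ∑ i, (α i : ℕ) < ∑ i, (x i : ℕ) :=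
        Finset.sum_lt_sum (fun i _ => hc i) ⟨i0, Finset.mem_univ _, hi0⟩
      rw [hα, hx] at hlt
      exact lt_irrefl a hlt
    obtain ⟨i, hi⟩ := hex
    simp only [Matrix.toSquareBlock_def]
    exact Finset.prod_eq_zero (Finset.mem_univ i)
      (by rw [Nat.choose_eq_zero_of_lt hi, Nat.cast_zero])

lemma phiMat_isUnit : IsUnit (phiMat p k n) := by
  classical
  rw [Matrix.isUnit_iff_isUnit_det]
  rw [(phiMat_blockTriangular p k n).det]
  rw [Finset.prod_congr rfl (fun a _ => by rw [phiMat_block_eq_one p k n a, Matrix.det_one])]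
  simp

end Main

/-- For `m ≤ p^k − 1` and `n ≥ 1`, `dim Ω_m^n = C(m+n, n)`; in particular
the `φ_α` for `α ∈ {0,…,p^k−1}^n` are linearly independent over `ℤ/pℤ`. -/
theorem stmt_15 (p k n m : ℕ) [Fact p.Prime] (hk : 1 ≤ k) (hn : 1 ≤ n)
    (hm : m ≤ p ^ k - 1) :
    Module.finrank (ZMod p)
      (Submodule.span (ZMod p)
        {f : (Fin n → ZMod (p ^ k)) → ZMod p |
          ∃ α : Fin n → ℕ, (∑ i, α i) ≤ m ∧ f = phiN p k n α}) = (m + n).choose n ∧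
    LinearIndependent (ZMod p)
      (fun α : Fin n → Fin (p ^ k) => phiN p k n (fun i => (α i).val)) := by
  classical
  have hp : 0 < p ^ k := pow_pos (Fact.out : p.Prime).pos k
  haveI : NeZero (p ^ k) := ⟨hp.ne'⟩
  -- the equivalence between points and index tuples
  let ζ : ZMod (p ^ k) ≃ Fin (p ^ k) :=
    { toFun := fun x => ⟨x.val, ZMod.val_lt x⟩
      invFun := fun i => ((i : ℕ) : ZMod (p ^ k))
      left_inv := fun x => by simp [ZMod.natCast_val, ZMod.cast_id]
      right_inv := fun i => by
        simp [Fin.ext_iff, ZMod.val_cast_of_lt i.isLt] }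
  let ε : (Fin n → ZMod (p ^ k)) ≃ (Fin n → Fin (p ^ k)) :=
    Equiv.piCongrRight fun _ => ζ
  -- linear independence of the full family
  have hrows : LinearIndependent (ZMod p) (fun α => phiMat p k n α) :=
    Matrix.linearIndependent_rows_iff_isUnit.2 (phiMat_isUnit p k n)
  let L := LinearEquiv.funCongrLeft (ZMod p) (ZMod p) ε
  have hLI : LinearIndependent (ZMod p)
      (fun α : Fin n → Fin (p ^ k) => phiN p k n (fun i => (α i).val)) := by
    have h := hrows.map' L.toLinearMap L.ker
    have heq : (fun α : Fin n → Fin (p ^ k) => phiN p k n (fun i => (α i).val))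
        = ⇑L.toLinearMap ∘ (fun α => phiMat p k n α) := by
      funext α x
      simp [L, phiN, phi, phiMat, ε, ζ, LinearEquiv.funCongrLeft, Function.comp]
    rw [heq]
    exact h
  refine ⟨?_, hLI⟩
  -- the set equals the image of the subfamily
  set e : (Fin n → Fin (p ^ k)) → ((Fin n → ZMod (p ^ k)) → ZMod p) :=
    fun α => phiN p k n (fun i => (α i).val) with he
  set T : Set (Fin n → Fin (p ^ k)) := {α | ∑ i, (α i : ℕ) ≤ m} with hT
  have hset : {f : (Fin n → ZMod (p ^ k)) → ZMod p |
      ∃ α : Fin n → ℕ, (∑ i, α i) ≤ m ∧ f = phiN p k n α} = e '' T := by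
    ext f
    constructor
    · rintro ⟨α, hα, rfl⟩
      have hb : ∀ i, α i < p ^ k := by
        intro i
        have : α i ≤ ∑ j, α j :=
          Finset.single_le_sum (fun j _ => Nat.zero_le _) (Finset.mem_univ i)
        omega
      refine ⟨fun i => ⟨α i, hb i⟩, ?_, ?_⟩
      · simpa [hT] using hα
      · rfl
    · rintro ⟨α, hα, rfl⟩
      refine ⟨fun i => (α i).val, ?_, ?_⟩
      · exact hα
      · rfl
  rw [hset]
  -- linear independence of the restricted family, as a set
  have hres : LinearIndependent (ZMod p)
      ((↑) : (e '' T) → ((Fin n → ZMod (p ^ k)) → ZMod p)) := by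
    have h1 : LinearIndependent (ZMod p) (fun a : T => e a) :=
      hLI.comp (Subtype.val : T → (Fin n → Fin (p ^ k))) Subtype.val_injective
    have h2 := (linearIndepOn_id_range_iff h1.injective).2 h1
    rwa [← Set.image_eq_range e T] at h2
  letI : Fintype (e '' T) := (Set.toFinite _).fintype
  rw [finrank_span_set_eq_card hres]
  have hinj : Function.Injective e := hLI.injective
  rw [Set.toFinset_image, Finset.card_image_of_injective _ hinj]
  have : T.toFinset = Finset.univ.filter (fun α : Fin n → Fin (p ^ k) => ∑ i, (α i : ℕ) ≤ m) := by
    ext α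
    simp [hT]
  rw [this, count_tuples n m (p ^ k) (by omega)]
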